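/- Let W(t) = ∑_{w∈W} t^{|w|} be the spherical growth series of an infinite Coxeter group W, with radius of convergence ρ. Then 0 < ρ ≤ 1, and the series ∑_{w∈W} ρ^{|w|} diverges. -/

import Mathlib

namespace GrowthSeriesAux

variable {B W : Type*} [Group W] {M : CoxeterMatrix B} (cs : CoxeterSystem M W)

/-- A chosen reduced word for each element. -/
noncomputable def rw (w : W) : List B := (cs.exists_reduced_word w).choose

lemma rw_length (w : W) : (rw cs w).length = cs.length w :=
  have h := (cs.exists_reduced_word w).choose_spec
  h.1.symm.trans (congrArg cs.length h.2.symm)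

lemma rw_prod (w : W) : cs.wordProd (rw cs w) = w :=
  ((cs.exists_reduced_word w).choose_spec.2).symm

lemma rw_isReduced (w : W) : cs.IsReduced (rw cs w) := by
  unfold CoxeterSystem.IsReduced
  rw [rw_prod, rw_length]

variable [Finite B]

lemma ball_finite (n : ℕ) : {w : W | cs.length w ≤ n}.Finite := by
  have h : Set.InjOn (rw cs) {w : W | cs.length w ≤ n} := fun u _ v _ h => by
    rw [← rw_prod cs u, ← rw_prod cs v, h]
  refine Set.Finite.of_finite_image ?_ h
  refine (List.finite_length_le B n).subset ?_
  rintro l ⟨w, hw, rfl⟩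
  simpa [rw_length] using hw

lemma sphere_finite (n : ℕ) : {w : W | cs.length w = n}.Finite :=
  (ball_finite cs n).subset (fun w hw => le_of_eq hw)

instance sphereFin (n : ℕ) : Finite {w : W // cs.length w = n} :=
  sphere_finite cs n

/-- sphere cardinality -/
noncomputable def a (n : ℕ) : ℕ := Nat.card {w : W // cs.length w = n}

/-- ball cardinality -/
noncomputable def b (n : ℕ) : ℕ := {w : W | cs.length w ≤ n}.ncard

lemma a_le_b (n : ℕ) : a cs n ≤ b cs n := by
  have := Set.ncard_le_ncard (show {w : W | cs.length w = n} ⊆ {w : W | cs.length w ≤ n}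
    from fun w hw => le_of_eq hw) (ball_finite cs n)
  have e : Nat.card {w : W // cs.length w = n} = {w : W | cs.length w = n}.ncard :=
    Nat.card_coe_set_eq _
  simpa [a, b, e] using this

lemma a_le_card_pow (n : ℕ) : a cs n ≤ (Nat.card B) ^ n := by
  have hinj : Function.Injective
      (fun w : {w : W // cs.length w = n} =>
        (⟨(rw cs w.1).take n, by simp [rw_length, w.2]⟩ : {l : List B // l.length = n})) := by
    rintro ⟨u, hu⟩ ⟨v, hv⟩ h
    simp only [Subtype.mk.injEq] at h ⊢
    have hu' : (rw cs u).take n = rw cs u := by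
      rw [List.take_of_length_le]; rw [rw_length, hu]
    have hv' : (rw cs v).take n = rw cs v := by
      rw [List.take_of_length_le]; rw [rw_length, hv]
    rw [hu', hv'] at h
    rw [← rw_prod cs u, ← rw_prod cs v, h]
  haveI : Finite {l : List B // l.length = n} := List.finite_length_eq B n
  calc a cs n ≤ Nat.card {l : List B // l.length = n} := Nat.card_le_card_of_injective _ hinj
    _ = Nat.card (Fin n → B) := Nat.card_congr (Equiv.vectorEquivFin B n)
    _ = (Nat.card B) ^ n := by simp [Nat.card_fun]

variable [Finite B]

section Infinite
variable [Infinite W]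

lemma exists_length_eq (n : ℕ) : ∃ w : W, cs.length w = n := by
  -- lengths are unbounded
  obtain ⟨w, hw⟩ : ∃ w : W, n ≤ cs.length w := by
    by_contra h
    push_neg at h
    have : (Set.univ : Set W).Finite := by
      refine (ball_finite cs n).subset fun w _ => (h w).le
    exact Set.infinite_univ this
  refine ⟨cs.wordProd ((rw cs w).take n), ?_⟩
  have hred := CoxeterSystem.IsReduced.take (rw_isReduced cs w) n
  rw [hred, List.length_take, rw_length]
  exact min_eq_left hw

lemma one_le_a (n : ℕ) : 1 ≤ a cs n := by
  obtain ⟨w, hw⟩ := exists_length_eq cs n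
  have : Nonempty {w : W // cs.length w = n} := ⟨⟨w, hw⟩⟩
  exact Nat.one_le_iff_ne_zero.mpr (Nat.card_ne_zero.mpr ⟨this, sphereFin cs n⟩)

end Infinite

lemma b_mono : Monotone (b cs) := fun m n h =>
  Set.ncard_le_ncard (fun w hw => le_trans hw h) (ball_finite cs n)

lemma b_add_le (m k : ℕ) : b cs (m + k) ≤ b cs m * b cs k := by
  classical
  set f : W → W × W := fun w =>
    (cs.wordProd ((rw cs w).take m), cs.wordProd ((rw cs w).drop m)) with hf
  have hmaps : Set.MapsTo f {w : W | cs.length w ≤ m + k}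
      ({u : W | cs.length u ≤ m} ×ˢ {v : W | cs.length v ≤ k}) := by
    intro w hw
    simp only [Set.mem_setOf_eq] at hw
    constructor
    · have hred := CoxeterSystem.IsReduced.take (rw_isReduced cs w) m
      rw [Set.mem_setOf_eq, hred, List.length_take]
      exact min_le_left _ _
    · have hred := CoxeterSystem.IsReduced.drop (rw_isReduced cs w) m
      rw [Set.mem_setOf_eq, hred, List.length_drop, rw_length]
      omega
  have hinj : Set.InjOn f {w : W | cs.length w ≤ m + k} := by
    intro u _ v _ h
    have hu : f u = (cs.wordProd ((rw cs u).take m), cs.wordProd ((rw cs u).drop m)) := rfl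
    have h1 : cs.wordProd ((rw cs u).take m) * cs.wordProd ((rw cs u).drop m)
        = cs.wordProd ((rw cs v).take m) * cs.wordProd ((rw cs v).drop m) := by
      rw [Prod.ext_iff] at h
      simp only [hf] at h
      rw [h.1, h.2]
    rw [← cs.wordProd_append, ← cs.wordProd_append, List.take_append_drop,
      List.take_append_drop, rw_prod, rw_prod] at h1
    exact h1
  calc b cs (m + k) ≤ ({u : W | cs.length u ≤ m} ×ˢ {v : W | cs.length v ≤ k}).ncard :=
        Set.ncard_le_ncard_of_injOn f hmaps hinj ((ball_finite cs m).prod (ball_finite cs k))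
    _ = b cs m * b cs k := by
        rw [b, b, ← Nat.card_coe_set_eq, ← Nat.card_coe_set_eq,
          ← Nat.card_coe_set_eq, ← Nat.card_prod]
        exact Nat.card_congr (Equiv.Set.prod _ _)

lemma b_zero : b cs 0 = 1 := by
  have : {w : W | cs.length w ≤ 0} = {1} := by
    ext w
    simp [Nat.le_zero, cs.length_eq_zero_iff]
  rw [b, this, Set.ncard_singleton]

lemma b_succ_le (m : ℕ) : b cs (m + 1) ≤ b cs m + a cs (m + 1) := by
  have hset : {w : W | cs.length w ≤ m + 1}
      = {w : W | cs.length w ≤ m} ∪ {w : W | cs.length w = m + 1} := by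
    ext w; simp only [Set.mem_setOf_eq, Set.mem_union]; omega
  calc b cs (m + 1) = _ := by rw [b, hset]
    _ ≤ _ := Set.ncard_union_le _ _
    _ = b cs m + a cs (m + 1) := by
        simp only [b, a, ← Nat.card_coe_set_eq]
        rfl


lemma summable_iff_coeff (t : ℝ) (ht : 0 ≤ t) :
    Summable (fun w : W => t ^ cs.length w) ↔
      Summable (fun n : ℕ => (a cs n : ℝ) * t ^ n) := by
  classical
  rw [← (Equiv.sigmaFiberEquiv cs.length).summable_iff]
  have hcomp : ((fun w : W => t ^ cs.length w) ∘ (Equiv.sigmaFiberEquiv cs.length))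
      = fun p : Σ n : ℕ, {w : W // cs.length w = n} => t ^ p.1 := by
    funext p
    simp only [Function.comp_apply, Equiv.sigmaFiberEquiv, Equiv.coe_fn_mk]
    rw [p.2.2]
  rw [hcomp, summable_sigma_of_nonneg (fun p => pow_nonneg ht _)]
  have htsum : ∀ n : ℕ, (∑' _ : {w : W // cs.length w = n}, t ^ n) = (a cs n : ℝ) * t ^ n := by
    intro n
    haveI : Fintype {w : W // cs.length w = n} := Fintype.ofFinite _
    rw [tsum_fintype, Finset.sum_const, a, Nat.card_eq_fintype_card, Finset.card_univ,
      nsmul_eq_mul]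
  constructor
  · rintro ⟨-, h2⟩
    simpa only [htsum] using h2
  · intro h
    refine ⟨fun n => Summable.of_finite, ?_⟩
    simpa only [htsum] using h


lemma b_mul_le (n m : ℕ) : b cs (n * m) ≤ b cs n ^ m := by
  induction m with
  | zero => simp [b_zero]
  | succ m ih =>
      calc b cs (n * (m + 1)) = b cs (n * m + n) := by ring_nf
        _ ≤ b cs (n * m) * b cs n := b_add_le cs _ _
        _ ≤ b cs n ^ m * b cs n := Nat.mul_le_mul_right _ ih
        _ = b cs n ^ (m + 1) := by ring

lemma b_le_pow (n k : ℕ) (hn : 1 ≤ n) : b cs k ≤ b cs n ^ (k / n + 1) := by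
  calc b cs k ≤ b cs (n * (k / n + 1)) := by
        refine b_mono cs ?_
        have h1 := Nat.div_add_mod k n
        have h2 := Nat.mod_lt k (show 0 < n by omega)
        calc k = n * (k / n) + k % n := h1.symm
          _ ≤ n * (k / n) + n := by omega
          _ = n * (k / n + 1) := by ring
    _ ≤ b cs n ^ (k / n + 1) := b_mul_le cs n _

set_option maxHeartbeats 1000000 in
lemma summable_coeff_of_ball_lt (n : ℕ) (hn : 1 ≤ n) (t : ℝ) (ht : 0 ≤ t)
    (h : (b cs n : ℝ) * t ^ n < 1) :
    Summable (fun k : ℕ => (a cs k : ℝ) * t ^ k) := by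
  haveI : NeZero n := ⟨by omega⟩
  set c : ℝ := (b cs n : ℝ) * t ^ n with hc
  have hc0 : 0 ≤ c := mul_nonneg (Nat.cast_nonneg _) (pow_nonneg ht _)
  set D : ℝ := (b cs n : ℝ) * max 1 (t ^ n) with hD
  have hD0 : 0 ≤ D := mul_nonneg (Nat.cast_nonneg _) (le_trans zero_le_one (le_max_left _ _))
  -- summability of the dominating series
  have hdom : Summable (fun k : ℕ => D * c ^ (k / n)) := by
    have h1 : Summable (fun p : ℕ × Fin n => c ^ p.1 * (1 : ℝ)) :=
      (summable_geometric_of_lt_one hc0 h).mul_of_nonneg Summable.of_finite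
        (fun k => pow_nonneg hc0 _) (fun _ => zero_le_one)
    have h2 : Summable (fun k : ℕ => c ^ (k / n)) := by
      have h3 := ((Nat.divModEquiv n).summable_iff
        (f := fun p : ℕ × Fin n => c ^ p.1 * 1)).mpr h1
      have h4 : ((fun p : ℕ × Fin n => c ^ p.1 * 1) ∘ (Nat.divModEquiv n))
          = fun k : ℕ => c ^ (k / n) := by
        funext k
        simp [Nat.divModEquiv]
      rwa [h4] at h3
    exact h2.mul_left D
  refine hdom.of_nonneg_of_le
    (fun k => mul_nonneg (Nat.cast_nonneg _) (pow_nonneg ht _)) (fun k => ?_)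
  have hsplit : t ^ k = (t ^ n) ^ (k / n) * t ^ (k % n) := by
    rw [← pow_mul, ← pow_add, Nat.div_add_mod]
  have hb : (a cs k : ℝ) ≤ (b cs n : ℝ) ^ (k / n + 1) := by
    have h1 : a cs k ≤ b cs n ^ (k / n + 1) := le_trans (a_le_b cs k) (b_le_pow cs n k hn)
    exact_mod_cast h1
  have htrem : t ^ (k % n) ≤ max 1 (t ^ n) := by
    rcases le_or_gt t 1 with h1 | h1
    · exact le_max_of_le_left (pow_le_one₀ ht h1)
    · refine le_max_of_le_right (pow_le_pow_right₀ h1.le (Nat.mod_lt k (by omega)).le)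
  calc (a cs k : ℝ) * t ^ k ≤ (b cs n : ℝ) ^ (k / n + 1) * t ^ k := by
        refine mul_le_mul_of_nonneg_right hb (pow_nonneg ht _)
    _ = (b cs n : ℝ) * ((b cs n : ℝ) ^ (k / n) * (t ^ n) ^ (k / n)) * t ^ (k % n) := by
        rw [hsplit]; ring
    _ = (b cs n : ℝ) * c ^ (k / n) * t ^ (k % n) := by rw [← mul_pow]
    _ ≤ (b cs n : ℝ) * c ^ (k / n) * max 1 (t ^ n) := by
        refine mul_le_mul_of_nonneg_left htrem
          (mul_nonneg (Nat.cast_nonneg _) (pow_nonneg hc0 _))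
    _ = D * c ^ (k / n) := by rw [hD]; ring


lemma one_le_b (n : ℕ) : 1 ≤ b cs n := by
  have := b_mono cs (Nat.zero_le n)
  rw [b_zero] at this
  exact this

lemma b_le_b_add_sum (N n : ℕ) (h : N ≤ n) :
    b cs n ≤ b cs N + ∑ k ∈ Finset.Ioc N n, a cs k := by
  induction n, h using Nat.le_induction with
  | base => simp
  | succ n hn ih =>
      have h1 := b_succ_le cs n
      rw [Finset.sum_Ioc_succ_top (by omega)]
      omega

end GrowthSeriesAux

open GrowthSeriesAux Filter in
/-- Let `ρ` be the radius of convergence of the spherical growth series of an infinite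
Coxeter group `W` with finitely many generators, realized as the supremum of the set of
`t ≥ 0` at which `∑_{w ∈ W} t^{|w|}` converges. Then `0 < ρ ≤ 1` and the series
`∑_{w ∈ W} ρ^{|w|}` diverges. -/
theorem growth_series_radius_of_convergence
    {B W : Type*} [Group W] (M : CoxeterMatrix B) (cs : CoxeterSystem M W)
    [Finite B] [Infinite W]
    (ρ : ℝ) (hρ : ρ = sSup {t : ℝ | 0 ≤ t ∧ Summable (fun w : W => t ^ cs.length w)}) :
    0 < ρ ∧ ρ ≤ 1 ∧ ¬ Summable (fun w : W => ρ ^ cs.length w) := by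
  classical
  set S : Set ℝ := {t : ℝ | 0 ≤ t ∧ Summable (fun w : W => t ^ cs.length w)} with hS
  -- B is nonempty
  have hBne : Nonempty B := by
    by_contra h
    rw [not_nonempty_iff] at h
    have h1 : ∀ w : W, w = 1 := by
      intro w
      obtain ⟨l, -, rfl⟩ := cs.exists_reduced_word' w
      cases l with
      | nil => simp
      | cons i _ => exact (h.false i).elim
    have : Subsingleton W := ⟨fun u v => by rw [h1 u, h1 v]⟩
    exact not_finite W
  have hN1 : 1 ≤ Nat.card B := Nat.card_pos
  set N₀ : ℝ := (Nat.card B : ℝ) with hN₀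
  have hN₀1 : 1 ≤ N₀ := by rw [hN₀]; exact_mod_cast hN1
  set t₀ : ℝ := (2 * N₀)⁻¹ with ht₀
  have ht₀pos : 0 < t₀ := by positivity
  -- t₀ belongs to S
  have ht₀S : t₀ ∈ S := by
    refine ⟨ht₀pos.le, (summable_iff_coeff cs t₀ ht₀pos.le).mpr ?_⟩
    have hgeo : Summable (fun k : ℕ => ((1:ℝ)/2) ^ k) :=
      summable_geometric_of_lt_one (by norm_num) (by norm_num)
    refine hgeo.of_nonneg_of_le
      (fun k => mul_nonneg (Nat.cast_nonneg _) (pow_nonneg ht₀pos.le _)) (fun k => ?_)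
    have h1 : (a cs k : ℝ) ≤ N₀ ^ k := by rw [hN₀]; exact_mod_cast a_le_card_pow cs k
    have h2 : N₀ * t₀ = 1 / 2 := by
      rw [ht₀]
      field_simp
    calc (a cs k : ℝ) * t₀ ^ k ≤ N₀ ^ k * t₀ ^ k :=
          mul_le_mul_of_nonneg_right h1 (pow_nonneg ht₀pos.le _)
      _ = (N₀ * t₀) ^ k := (mul_pow _ _ _).symm
      _ = ((1:ℝ)/2) ^ k := by rw [h2]
  -- every element of S is < 1
  have hlt1 : ∀ t ∈ S, t < 1 := by
    rintro t ⟨ht0, hsum⟩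
    by_contra h
    push_neg at h
    have h1 : ∀ w : W, 1 ≤ t ^ cs.length w := fun w => one_le_pow₀ h
    have h2 := hsum.tendsto_cofinite_zero
    have h3 : (fun w : W => t ^ cs.length w) ⁻¹' Set.Iio 1 ∈ Filter.cofinite :=
      h2 (Iio_mem_nhds zero_lt_one)
    have h4 : (fun w : W => t ^ cs.length w) ⁻¹' Set.Iio 1 = ∅ := by
      ext w
      simp only [Set.mem_preimage, Set.mem_Iio, Set.mem_empty_iff_false, iff_false, not_lt]
      exact h1 w
    rw [h4, Filter.mem_cofinite, Set.compl_empty] at h3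
    exact Set.infinite_univ h3
  have hbdd : BddAbove S := ⟨1, fun t ht => (hlt1 t ht).le⟩
  have hne : S.Nonempty := ⟨t₀, ht₀S⟩
  have hρ0 : 0 < ρ := lt_of_lt_of_le ht₀pos (hρ ▸ le_csSup hbdd ht₀S)
  have hρ1 : ρ ≤ 1 := hρ ▸ csSup_le hne (fun t ht => (hlt1 t ht).le)
  refine ⟨hρ0, hρ1, ?_⟩
  intro hsum
  have hρS : ρ ∈ S := ⟨hρ0.le, hsum⟩
  have hρlt1 : ρ < 1 := hlt1 ρ hρS
  set F : ℕ → ℝ := fun k => (a cs k : ℝ) * ρ ^ k with hF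
  have hFsum : Summable F := (summable_iff_coeff cs ρ hρ0.le).mp hsum
  have hFnn : ∀ k, 0 ≤ F k := fun k =>
    mul_nonneg (Nat.cast_nonneg _) (pow_nonneg hρ0.le _)
  -- Key claim : 1 ≤ b n * ρ^n for n ≥ 1
  have hclaim : ∀ n : ℕ, 1 ≤ n → 1 ≤ (b cs n : ℝ) * ρ ^ n := by
    intro n hn
    by_contra hlt
    push_neg at hlt
    set q : ℝ := (b cs n : ℝ) * ρ ^ n with hq
    have hb1 : (1:ℝ) ≤ (b cs n : ℝ) := by exact_mod_cast one_le_b cs n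
    have hq0 : 0 < q := mul_pos (by linarith) (pow_pos hρ0 n)
    set s : ℝ := q ^ (-(1:ℝ)/(2*n)) with hs
    have hs1 : 1 < s := by
      rw [hs]
      rw [Real.one_lt_rpow_iff_of_pos hq0]
      right
      constructor
      · exact hlt
      · rw [div_neg_iff]
        right
        constructor
        · norm_num
        · positivity
    have hsn : s ^ n = q ^ (-(1:ℝ)/2) := by
      rw [hs, ← Real.rpow_natCast (q ^ (-(1:ℝ)/(2*n))) n, ← Real.rpow_mul hq0.le]
      congr 1
      have hn' : (n : ℝ) ≠ 0 := by positivity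
      field_simp
    set t : ℝ := s * ρ with ht
    have ht0 : 0 < t := mul_pos (by linarith) hρ0
    have hkey : (b cs n : ℝ) * t ^ n < 1 := by
      have he : (b cs n : ℝ) * t ^ n = s ^ n * q := by
        rw [ht, mul_pow, hq]; ring
      rw [he, hsn]
      calc q ^ (-(1:ℝ)/2) * q = q ^ (-(1:ℝ)/2) * q ^ (1:ℝ) := by rw [Real.rpow_one]
        _ = q ^ ((1:ℝ)/2) := by rw [← Real.rpow_add hq0]; norm_num
        _ < 1 := Real.rpow_lt_one hq0.le hlt (by norm_num)
    have htS : t ∈ S := by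
      refine ⟨ht0.le, (summable_iff_coeff cs t ht0.le).mpr ?_⟩
      exact summable_coeff_of_ball_lt cs n hn t ht0.le hkey
    have htle : t ≤ ρ := hρ ▸ le_csSup hbdd htS
    have : ρ < t := (lt_mul_iff_one_lt_left hρ0).mpr hs1
    linarith
  -- Tail estimate
  set T : ℝ := ∑' k, F k with hT
  obtain ⟨N, hNtail⟩ : ∃ N : ℕ, T - ∑ k ∈ Finset.range (N + 1), F k < 1/2 := by
    have h1 : Tendsto (fun m => ∑ k ∈ Finset.range m, F k) atTop (nhds T) :=
      hFsum.hasSum.tendsto_sum_nat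
    have h2 : ∀ᶠ m in atTop, T - 1/2 < ∑ k ∈ Finset.range m, F k :=
      h1.eventually (eventually_gt_nhds (by linarith))
    obtain ⟨m, hm⟩ := h2.exists
    refine ⟨m, ?_⟩
    have h3 : ∑ k ∈ Finset.range m, F k ≤ ∑ k ∈ Finset.range (m + 1), F k := by
      rw [Finset.sum_range_succ]
      have := hFnn m
      linarith
    linarith
  -- choose large n
  obtain ⟨n, hn⟩ : ∃ n : ℕ, max N 1 ≤ n ∧ (b cs N : ℝ) * ρ ^ n < 1/2 := by
    have h1 : Tendsto (fun n : ℕ => (b cs N : ℝ) * ρ ^ n) atTop (nhds 0) := by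
      simpa using (tendsto_pow_atTop_nhds_zero_of_lt_one hρ0.le hρlt1).const_mul
        ((b cs N : ℝ))
    have h2 : ∀ᶠ n : ℕ in atTop, (b cs N : ℝ) * ρ ^ n < 1/2 :=
      h1.eventually (eventually_lt_nhds (by norm_num))
    exact ((eventually_ge_atTop (max N 1)).and h2).exists
  obtain ⟨hnN, hnsmall⟩ := hn
  have hNn : N ≤ n := le_trans (le_max_left _ _) hnN
  have hn1 : 1 ≤ n := le_trans (le_max_right _ _) hnN
  -- assemble contradiction
  have h1 : (b cs n : ℝ) ≤ (b cs N : ℝ) + ∑ k ∈ Finset.Ioc N n, (a cs k : ℝ) := by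
    have := b_le_b_add_sum cs N n hNn
    push_cast
    exact_mod_cast this
  have h2 : (b cs n : ℝ) * ρ ^ n ≤
      (b cs N : ℝ) * ρ ^ n + ∑ k ∈ Finset.Ioc N n, (a cs k : ℝ) * ρ ^ n := by
    rw [← Finset.sum_mul, ← add_mul]
    exact mul_le_mul_of_nonneg_right h1 (pow_nonneg hρ0.le _)
  have h3 : ∑ k ∈ Finset.Ioc N n, (a cs k : ℝ) * ρ ^ n ≤ ∑ k ∈ Finset.Ioc N n, F k := by
    refine Finset.sum_le_sum (fun k hk => ?_)
    rw [Finset.mem_Ioc] at hk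
    refine mul_le_mul_of_nonneg_left ?_ (Nat.cast_nonneg _)
    exact pow_le_pow_of_le_one hρ0.le hρlt1.le hk.2
  have h4 : ∑ k ∈ Finset.Ioc N n, F k
      = ∑ k ∈ Finset.range (n + 1), F k - ∑ k ∈ Finset.range (N + 1), F k := by
    have h5 : ∑ k ∈ Finset.Ico 0 (N+1), F k + ∑ k ∈ Finset.Ico (N+1) (n+1), F k
        = ∑ k ∈ Finset.Ico 0 (n+1), F k :=
      Finset.sum_Ico_consecutive F (by omega) (by omega)
    have h6 : Finset.Ioc N n = Finset.Ico (N + 1) (n + 1) := by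
      ext x
      simp only [Finset.mem_Ioc, Finset.mem_Ico]
      omega
    rw [h6, Finset.range_eq_Ico, Finset.range_eq_Ico]
    linarith
  have h6 : ∑ k ∈ Finset.range (n + 1), F k ≤ T :=
    hFsum.sum_le_tsum _ (fun k _ => hFnn k)
  have h7 := hclaim n hn1
  linarith
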